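/- Let n ≥ 1, let R be a finite commutative symmetric ℤ/n-algebra with non-degenerate linear functional ψ : R → ℤ/n, let ζ ∈ ℂ be a primitive n-th root of unity, and let A_R be the R×R matrix over ℂ with entries A_R(r,t) = ζ^{ψ(r·t)}. If v : R → ℚ is a vector such that every entry of A_R v lies in ℚ (viewed inside ℂ), then A_R v is constant on the orbits of the (ℤ/n)ˣ-action on R: whenever r₂ = u•r₁ for some u ∈ (ℤ/n)ˣ, the r₁-entry and the r₂-entry of A_R v are equal. -/

import Mathlib

instance aux_cyc (n : ℕ) : IsCyclotomicExtension {n} ℚ (CyclotomicField n ℚ) := by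
  have h : @IsCyclotomicExtension {n} ℚ (CyclotomicField n ℚ) _ _ (CyclotomicField.algebra n ℚ) :=
    inferInstance
  convert h
  exact Subsingleton.elim _ _

open Polynomial in
theorem aux_embed (n : ℕ+) (ζ : ℂ) (hζ : IsPrimitiveRoot ζ n) :
    ∃ φ : CyclotomicField n ℚ →ₐ[ℚ] ℂ,
      φ (IsCyclotomicExtension.zeta n ℚ (CyclotomicField n ℚ)) = ζ := by
  have hξ := IsCyclotomicExtension.zeta_spec n ℚ (CyclotomicField n ℚ)
  have hirr : Irreducible (cyclotomic n ℚ) := cyclotomic.irreducible_rat n.pos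
  have hmem : ζ ∈ primitiveRoots (n : ℕ) ℂ := (mem_primitiveRoots n.pos).2 hζ
  refine ⟨(hξ.embeddingsEquivPrimitiveRoots ℂ hirr).symm ⟨ζ, hmem⟩, ?_⟩
  have h := hξ.embeddingsEquivPrimitiveRoots_apply_coe ℂ hirr
    ((hξ.embeddingsEquivPrimitiveRoots ℂ hirr).symm ⟨ζ, hmem⟩)
  rw [Equiv.apply_symm_apply] at h
  exact h.symm

/-- Let `R` be a finite commutative symmetric `ZMod n`-algebra with non-degenerate linear
functional `ψ`, and let `A_R` be the DFT matrix `A_R (r, t) = ζ ^ ψ (r * t)`. If `v : R → ℚ`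
is such that every entry of `A_R v` is rational, then `A_R v` is constant on the orbits
of the `(ZMod n)ˣ`-action on `R`. -/
theorem dft_rational_constant_on_orbits (n : ℕ) (hn : 1 ≤ n) (R : Type*) [CommRing R]
    [Fintype R] [Algebra (ZMod n) R] (ψ : R →+ ZMod n)
    (hψ : ∀ I : Ideal R, (∀ x ∈ I, ψ x = 0) → I = ⊥)
    (ζ : ℂ) (hζ : IsPrimitiveRoot ζ n) (v : R → ℚ) :
    let A : Matrix R R ℂ := Matrix.of fun r t => ζ ^ (ψ (r * t)).val
    (∀ r : R, A.mulVec (fun t => (v t : ℂ)) r ∈ Set.range ((↑) : ℚ → ℂ)) →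
      ∀ (u : (ZMod n)ˣ) (r₁ r₂ : R), r₂ = (u : ZMod n) • r₁ →
        A.mulVec (fun t => (v t : ℂ)) r₁ = A.mulVec (fun t => (v t : ℂ)) r₂ := by
  intro A hrat u r₁ r₂ hr
  haveI : NeZero n := ⟨by omega⟩
  set k : ℕ := ((u : ZMod n)).val with hk
  -- ζ^k is a primitive root
  have hcop : Nat.Coprime k n := ZMod.val_coe_unit_coprime u
  have hζ' : IsPrimitiveRoot (ζ ^ k) n := hζ.pow_of_coprime k hcop
  -- helper : powers mod n
  have hpow : ∀ m : ℕ, ζ ^ (m % n) = ζ ^ m := by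
    intro m
    conv_rhs => rw [← Nat.div_add_mod m n, pow_add, pow_mul, hζ.pow_eq_one, one_pow, one_mul]
  -- ψ of scalar multiple
  have hψs : ∀ (a : ZMod n) (x : R), ψ (a • x) = a * ψ x := by
    intro a x
    have h1 : a • x = (a.val : ℕ) • x := by
      rw [← Nat.cast_smul_eq_nsmul (ZMod n) a.val x, ZMod.natCast_val, ZMod.cast_id]
    rw [h1, map_nsmul, nsmul_eq_mul]
    simp [ZMod.natCast_val, ZMod.cast_id]
  -- exponent identity
  have hexp : ∀ t : R, (ζ ^ k) ^ (ψ (r₁ * t)).val = ζ ^ (ψ (r₂ * t)).val := by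
    intro t
    have h2 : ψ (r₂ * t) = (u : ZMod n) * ψ (r₁ * t) := by
      rw [hr, smul_mul_assoc, hψs]
    rw [h2, ← pow_mul, ← hpow (k * (ψ (r₁ * t)).val), ← ZMod.val_mul]
  -- set up cyclotomic field
  set np : ℕ+ := ⟨n, hn⟩ with hnp
  have hζn : IsPrimitiveRoot ζ (np : ℕ) := hζ
  have hζ'n : IsPrimitiveRoot (ζ ^ k) (np : ℕ) := hζ'
  obtain ⟨φ₁, hφ₁⟩ := aux_embed np ζ hζn
  obtain ⟨φ₂, hφ₂⟩ := aux_embed np (ζ ^ k) hζ'n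
  set ξ := IsCyclotomicExtension.zeta np ℚ (CyclotomicField np ℚ) with hξdef
  set S : CyclotomicField np ℚ :=
    ∑ t : R, (algebraMap ℚ _ (v t)) * ξ ^ (ψ (r₁ * t)).val with hS
  have hφ₁S : φ₁ S = A.mulVec (fun t => (v t : ℂ)) r₁ := by
    rw [hS, map_sum]
    simp only [map_mul, map_pow, hφ₁, AlgHom.commutes]
    simp only [Matrix.mulVec, dotProduct, A, Matrix.of_apply]
    refine Finset.sum_congr rfl fun t _ => ?_
    rw [eq_ratCast (algebraMap ℚ ℂ) (v t)]
    ring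
  have hφ₂S : φ₂ S = A.mulVec (fun t => (v t : ℂ)) r₂ := by
    rw [hS, map_sum]
    simp only [map_mul, map_pow, hφ₂, AlgHom.commutes]
    simp only [Matrix.mulVec, dotProduct, A, Matrix.of_apply]
    refine Finset.sum_congr rfl fun t _ => ?_
    rw [hexp t, eq_ratCast (algebraMap ℚ ℂ) (v t)]
    ring
  obtain ⟨q, hq⟩ := hrat r₁
  have hSq : S = algebraMap ℚ _ q := by
    have : φ₁ S = φ₁ (algebraMap ℚ _ q) := by
      rw [hφ₁S, ← hq, AlgHom.commutes, eq_ratCast (algebraMap ℚ ℂ) q]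
    exact φ₁.injective this
  rw [← hφ₁S, ← hφ₂S, hSq, AlgHom.commutes, AlgHom.commutes]
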